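/- Let β ∈ (0,1) and let demands D_1, …, D_m > 0 be not all equal, with identical strictly convex, strictly decreasing, differentiable per-cycle loss functions L (with L → 0 at ∞ and range containing the relevant values). Then the minimum of Σ s_i subject to the aggregate constraint Σ L(s_i) ≤ (1-β) Σ D_i is strictly less than the minimum subject to the per-cycle constraints L(s_i) ≤ (1-β) D_i for all i. -/

import Mathlib

open Finset Filter

theorem aggregate_constraint_strictly_cheaper
    (m : ℕ) (hm : 1 ≤ m) (D : Fin m → ℝ) (β : ℝ)
    (hβ0 : 0 < β) (hβ1 : β < 1) (hD : ∀ i, 0 < D i)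
    (hne : ∃ i j : Fin m, D i ≠ D j)
    (L : ℝ → ℝ) (hLpos : ∀ s, 0 < L s) (hanti : StrictAnti L)
    (hconv : StrictConvexOn ℝ Set.univ L) (hdiff : Differentiable ℝ L)
    (htail : Tendsto L atTop (nhds 0))
    (hrange : ∀ i, (1 - β) * D i ∈ Set.range L)
    (hrange' : (1 - β) * (∑ i, D i) / m ∈ Set.range L) :
    ∃ s : Fin m → ℝ, (∑ i, L (s i)) ≤ (1 - β) * ∑ i, D i ∧
      ∀ s' : Fin m → ℝ, (∀ i, L (s' i) ≤ (1 - β) * D i) →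
        ∑ i, s i < ∑ i, s' i := by
  have hm0 : (0:ℝ) < m := by exact_mod_cast hm
  obtain ⟨c, hc⟩ := hrange'
  choose t ht using hrange
  refine ⟨fun _ => c, ?_, ?_⟩
  · rw [Finset.sum_const, Finset.card_univ, Fintype.card_fin, nsmul_eq_mul, hc]
    field_simp
    exact le_rfl
  · intro s' hs'
    have hts' : ∀ i, t i ≤ s' i := by
      intro i
      by_contra h
      push_neg at h
      exact absurd (hs' i) (by rw [← ht i]; exact not_le.2 (hanti h))
    -- strict Jensen
    have hjensen : L (∑ i, (1/(m:ℝ)) • t i) < ∑ i, (1/(m:ℝ)) • L (t i) := by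
      apply hconv.map_sum_lt (t := Finset.univ)
      · intro i _; positivity
      · rw [Finset.sum_const, Finset.card_univ, Fintype.card_fin, nsmul_eq_mul]
        field_simp
      · intro i _; trivial
      · obtain ⟨i, j, hij⟩ := hne
        refine ⟨i, Finset.mem_univ _, j, Finset.mem_univ _, ?_⟩
        intro h
        apply hij
        have := congrArg L h
        rw [ht i, ht j] at this
        have hβ' : (0:ℝ) < 1 - β := by linarith
        exact mul_left_cancel₀ (ne_of_gt hβ') this
    have hsum : ∑ i, (1/(m:ℝ)) • L (t i) = L c := by
      simp only [smul_eq_mul, ht, ← Finset.mul_sum]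
      rw [hc]; ring
    rw [hsum] at hjensen
    have hclt : c < ∑ i, (1/(m:ℝ)) • t i := by
      by_contra h
      push_neg at h
      exact absurd (hanti.antitone h) (not_le.2 hjensen)
    have : ∑ i, (1/(m:ℝ)) • t i = (∑ i, t i) / m := by
      simp only [smul_eq_mul, ← Finset.mul_sum]; ring
    rw [this] at hclt
    have hmc : (m:ℝ) * c < ∑ i, t i := by
      rwa [lt_div_iff₀ hm0, mul_comm] at hclt
    calc ∑ _i : Fin m, c = (m:ℝ) * c := by
          rw [Finset.sum_const, Finset.card_univ, Fintype.card_fin, nsmul_eq_mul]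
      _ < ∑ i, t i := hmc
      _ ≤ ∑ i, s' i := Finset.sum_le_sum fun i _ => hts' i
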